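/- Elegant Bell SOS decomposition: let A_0, A_1, A_2, A_3 and B_0, B_1, B_2 be Hermitian operators squaring to the identity on a finite-dimensional Hilbert space, with each A_x commuting with each B_y. Define B^{el} = (A_0+A_1−A_2−A_3)B_0 + (A_0−A_1+A_2−A_3)B_1 + (A_0−A_1−A_2+A_3)B_2 and P_0 = A_0 − (B_0+B_1+B_2)/√3, P_1 = A_1 − (B_0−B_1−B_2)/√3, P_2 = A_2 − (−B_0+B_1−B_2)/√3, P_3 = A_3 − (−B_0−B_1+B_2)/√3. Then 4√3·1 − B^{el} = (√3/2) Σ_{i=0}^{3} P_i². In particular ⟨ψ, B^{el} ψ⟩ ≤ 4√3 for every unit vector ψ. -/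

import Mathlib

open Matrix

set_option maxHeartbeats 2000000

/-- Auxiliary: for a Hermitian matrix `P`, the quadratic form of `P * P` has
nonnegative real part. -/
lemma sq_quadform_re_nonneg {nn : ℕ} (P : Matrix (Fin nn) (Fin nn) ℂ)
    (hP : P.IsHermitian) (ψ : Fin nn → ℂ) :
    0 ≤ (star ψ ⬝ᵥ (P * P).mulVec ψ).re := by
  have h1 : star ψ ⬝ᵥ (P * P).mulVec ψ = star (P.mulVec ψ) ⬝ᵥ (P.mulVec ψ) := by
    rw [star_mulVec, hP.eq, ← Matrix.mulVec_mulVec, dotProduct_mulVec]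
  rw [h1]
  have h2 : star (P.mulVec ψ) ⬝ᵥ (P.mulVec ψ)
      = ((∑ i, Complex.normSq (P.mulVec ψ i) : ℝ) : ℂ) := by
    simp [dotProduct, Complex.normSq_eq_conj_mul_self]
  rw [h2, Complex.ofReal_re]
  exact Finset.sum_nonneg fun i _ => Complex.normSq_nonneg _

/-- Elegant Bell SOS decomposition: `4√3·1 − B^el = (√3/2) Σ_i P_i²`; in
particular `⟨ψ, B^el ψ⟩ ≤ 4√3` for every unit vector `ψ`. -/
theorem elegant_bell_sos {nn : ℕ}
    (A0 A1 A2 A3 B0 B1 B2 : Matrix (Fin nn) (Fin nn) ℂ)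
    (hA0 : A0.IsHermitian) (hA1 : A1.IsHermitian) (hA2 : A2.IsHermitian)
    (hA3 : A3.IsHermitian)
    (hB0 : B0.IsHermitian) (hB1 : B1.IsHermitian) (hB2 : B2.IsHermitian)
    (hA0sq : A0 * A0 = 1) (hA1sq : A1 * A1 = 1) (hA2sq : A2 * A2 = 1)
    (hA3sq : A3 * A3 = 1)
    (hB0sq : B0 * B0 = 1) (hB1sq : B1 * B1 = 1) (hB2sq : B2 * B2 = 1)
    (hcomm : ∀ X ∈ [A0, A1, A2, A3], ∀ Y ∈ [B0, B1, B2], Commute X Y)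
    (Bell P0 P1 P2 P3 : Matrix (Fin nn) (Fin nn) ℂ)
    (hBell : Bell = (A0 + A1 - A2 - A3) * B0 + (A0 - A1 + A2 - A3) * B1
      + (A0 - A1 - A2 + A3) * B2)
    (hP0 : P0 = A0 - ((Real.sqrt 3 : ℂ))⁻¹ • (B0 + B1 + B2))
    (hP1 : P1 = A1 - ((Real.sqrt 3 : ℂ))⁻¹ • (B0 - B1 - B2))
    (hP2 : P2 = A2 - ((Real.sqrt 3 : ℂ))⁻¹ • (-B0 + B1 - B2))
    (hP3 : P3 = A3 - ((Real.sqrt 3 : ℂ))⁻¹ • (-B0 - B1 + B2)) :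
    (((4 * Real.sqrt 3 : ℝ) : ℂ) • (1 : Matrix (Fin nn) (Fin nn) ℂ) - Bell =
      ((Real.sqrt 3 / 2 : ℝ) : ℂ) • (P0 * P0 + P1 * P1 + P2 * P2 + P3 * P3)) ∧
    (∀ ψ : Fin nn → ℂ, star ψ ⬝ᵥ ψ = 1 →
      (star ψ ⬝ᵥ Bell.mulVec ψ).re ≤ 4 * Real.sqrt 3) := by
  have c00 : B0 * A0 = A0 * B0 := (hcomm A0 (by simp) B0 (by simp)).eq.symm
  have c01 : B1 * A0 = A0 * B1 := (hcomm A0 (by simp) B1 (by simp)).eq.symm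
  have c02 : B2 * A0 = A0 * B2 := (hcomm A0 (by simp) B2 (by simp)).eq.symm
  have c10 : B0 * A1 = A1 * B0 := (hcomm A1 (by simp) B0 (by simp)).eq.symm
  have c11 : B1 * A1 = A1 * B1 := (hcomm A1 (by simp) B1 (by simp)).eq.symm
  have c12 : B2 * A1 = A1 * B2 := (hcomm A1 (by simp) B2 (by simp)).eq.symm
  have c20 : B0 * A2 = A2 * B0 := (hcomm A2 (by simp) B0 (by simp)).eq.symm
  have c21 : B1 * A2 = A2 * B1 := (hcomm A2 (by simp) B1 (by simp)).eq.symm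
  have c22 : B2 * A2 = A2 * B2 := (hcomm A2 (by simp) B2 (by simp)).eq.symm
  have c30 : B0 * A3 = A3 * B0 := (hcomm A3 (by simp) B0 (by simp)).eq.symm
  have c31 : B1 * A3 = A3 * B1 := (hcomm A3 (by simp) B1 (by simp)).eq.symm
  have c32 : B2 * A3 = A3 * B2 := (hcomm A3 (by simp) B2 (by simp)).eq.symm
  have ht : ((Real.sqrt 3 : ℝ) : ℂ) * ((Real.sqrt 3 : ℝ) : ℂ) = 3 := by
    have h := Real.mul_self_sqrt (by norm_num : (0:ℝ) ≤ 3)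
    exact_mod_cast h
  have ht0 : ((Real.sqrt 3 : ℝ) : ℂ) ≠ 0 := by
    simp [Real.sqrt_eq_zero']
  -- Hermiticity of the P_i
  have hstarc : star (((Real.sqrt 3 : ℝ) : ℂ))⁻¹ = (((Real.sqrt 3 : ℝ) : ℂ))⁻¹ := by
    rw [star_inv₀, Complex.star_def, Complex.conj_ofReal]
  have hHerm : ∀ (A S : Matrix (Fin nn) (Fin nn) ℂ), A.IsHermitian → S.IsHermitian →
      (A - ((Real.sqrt 3 : ℂ))⁻¹ • S).IsHermitian := by
    intro A S hA hS
    unfold Matrix.IsHermitian at *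
    rw [conjTranspose_sub, conjTranspose_smul, hA, hS, hstarc]
  have hP0H : P0.IsHermitian := by
    rw [hP0]; exact hHerm _ _ hA0 (by exact ((hB0.add hB1).add hB2))
  have hP1H : P1.IsHermitian := by
    rw [hP1]; exact hHerm _ _ hA1 ((hB0.sub hB1).sub hB2)
  have hP2H : P2.IsHermitian := by
    rw [hP2]; exact hHerm _ _ hA2 (((hB0.neg.add hB1).sub hB2))
  have hP3H : P3.IsHermitian := by
    rw [hP3]; exact hHerm _ _ hA3 (((hB0.neg.sub hB1).add hB2))
  have hSOS : (((4 * Real.sqrt 3 : ℝ) : ℂ) • (1 : Matrix (Fin nn) (Fin nn) ℂ) - Bell =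
      ((Real.sqrt 3 / 2 : ℝ) : ℂ) • (P0 * P0 + P1 * P1 + P2 * P2 + P3 * P3)) := by
    subst hBell hP0 hP1 hP2 hP3
    simp only [mul_add, add_mul, mul_sub, sub_mul, Matrix.smul_mul, Matrix.mul_smul,
      smul_smul, smul_add, smul_sub, mul_neg, neg_mul, mul_one,
      hA0sq, hA1sq, hA2sq, hA3sq, hB0sq, hB1sq, hB2sq,
      c00, c01, c02, c10, c11, c12, c20, c21, c22, c30, c31, c32]
    push_cast
    match_scalars <;> field_simp <;> ring_nf
    field_simp
    linear_combination 4 * ht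
  refine ⟨hSOS, ?_⟩
  intro ψ hψ
  have hBell' : Bell = ((4 * Real.sqrt 3 : ℝ) : ℂ) • (1 : Matrix (Fin nn) (Fin nn) ℂ)
      - ((Real.sqrt 3 / 2 : ℝ) : ℂ) • (P0 * P0 + P1 * P1 + P2 * P2 + P3 * P3) := by
    rw [← hSOS]; abel
  have hq : star ψ ⬝ᵥ Bell.mulVec ψ
      = ((4 * Real.sqrt 3 : ℝ) : ℂ)
      - ((Real.sqrt 3 / 2 : ℝ) : ℂ) * (star ψ ⬝ᵥ (P0*P0 + P1*P1 + P2*P2 + P3*P3).mulVec ψ) := by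
    rw [hBell']
    rw [Matrix.sub_mulVec, dotProduct_sub]
    rw [Matrix.smul_mulVec, Matrix.smul_mulVec, Matrix.one_mulVec,
      dotProduct_smul, dotProduct_smul, smul_eq_mul, smul_eq_mul, hψ, mul_one]
  have hsum : 0 ≤ (star ψ ⬝ᵥ (P0*P0 + P1*P1 + P2*P2 + P3*P3).mulVec ψ).re := by
    rw [Matrix.add_mulVec, Matrix.add_mulVec, Matrix.add_mulVec,
      dotProduct_add, dotProduct_add, dotProduct_add]
    simp only [Complex.add_re]
    have h0 := sq_quadform_re_nonneg P0 hP0H ψ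
    have h1 := sq_quadform_re_nonneg P1 hP1H ψ
    have h2 := sq_quadform_re_nonneg P2 hP2H ψ
    have h3 := sq_quadform_re_nonneg P3 hP3H ψ
    linarith
  rw [hq]
  rw [Complex.sub_re, Complex.ofReal_re, Complex.re_ofReal_mul]
  have h3 : (0:ℝ) ≤ Real.sqrt 3 / 2 := by positivity
  nlinarith [mul_nonneg h3 hsum]
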